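/- For h ∈ ℓ^∞(𝒳), the directional derivative Φ'_h(f) = ∫_{{h≠0}} sgn(h(x)) f(x) dx + ∫_{{h=0}} |f(x)| dx is a linear map in f if and only if the set {x ∈ 𝒳 : h(x) = 0} has Lebesgue measure zero. -/

import Mathlib

open MeasureTheory Filter Set

/-- The directional derivative of `f ↦ ∫_X |f|` at `h`. -/
noncomputable def dPhi {d : ℕ} (X : Set (Fin d → ℝ)) (h f : (Fin d → ℝ) → ℝ) : ℝ :=
  (∫ y in X ∩ {y | h y ≠ 0}, Real.sign (h y) * f y) + ∫ y in X ∩ {y | h y = 0}, |f y|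

lemma measurable_realSign : Measurable Real.sign := by
  unfold Real.sign
  exact Measurable.ite (measurableSet_lt measurable_id measurable_const) measurable_const
    (Measurable.ite (measurableSet_lt measurable_const measurable_id) measurable_const
      measurable_const)

lemma abs_realSign_le (a : ℝ) : |Real.sign a| ≤ 1 := by
  rcases Real.sign_apply_eq a with h | h | h <;> rw [h] <;> norm_num

/-- `Φ'_h` is linear on the bounded measurable functions if and only if the set
`{x ∈ X : h(x) = 0}` has Lebesgue measure zero. -/
theorem dPhi_linear_iff_null
    {d : ℕ} (X : Set (Fin d → ℝ)) (hX : IsCompact X) (hXm : MeasurableSet X)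
    (h : (Fin d → ℝ) → ℝ) (hhm : Measurable h) (Mh : ℝ) (hhb : ∀ y ∈ X, |h y| ≤ Mh) :
    ((∀ f g : (Fin d → ℝ) → ℝ, Measurable f → Measurable g →
        (∃ M, ∀ y ∈ X, |f y| ≤ M) → (∃ M, ∀ y ∈ X, |g y| ≤ M) →
        dPhi X h (f + g) = dPhi X h f + dPhi X h g) ∧
     (∀ f : (Fin d → ℝ) → ℝ, Measurable f → (∃ M, ∀ y ∈ X, |f y| ≤ M) →
        ∀ c : ℝ, dPhi X h (c • f) = c * dPhi X h f))
    ↔ volume (X ∩ {y | h y = 0}) = 0 := by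
  have hXfin : volume X < ⊤ := hX.measure_lt_top
  have hS0 : volume (X ∩ {y | h y = 0}) < ⊤ :=
    lt_of_le_of_lt (measure_mono inter_subset_left) hXfin
  constructor
  · rintro ⟨hadd, -⟩
    have key := hadd (fun _ => 1) (fun _ => -1) measurable_const measurable_const
      ⟨1, fun y _ => by norm_num⟩ ⟨1, fun y _ => by norm_num⟩
    simp only [dPhi, Pi.add_apply] at key
    norm_num [integral_neg, setIntegral_const, mul_neg_one] at key
    have h2 : (volume (X ∩ {y | h y = 0})).toReal = 0 := by
      change volume.real _ = 0; linarith
    rcases (ENNReal.toReal_eq_zero_iff _).mp h2 with h3 | h3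
    · exact h3
    · exact absurd h3 hS0.ne
  · intro hnull
    have hz : ∀ g : (Fin d → ℝ) → ℝ, (∫ y in X ∩ {y | h y = 0}, |g y|) = 0 := by
      intro g
      rw [Measure.restrict_eq_zero.mpr hnull, integral_zero_measure]
    have hS1m : MeasurableSet (X ∩ {y | h y ≠ 0}) :=
      hXm.inter ((hhm (measurableSet_singleton 0)).compl)
    have hS1fin : volume (X ∩ {y | h y ≠ 0}) ≠ ⊤ :=
      (lt_of_le_of_lt (measure_mono inter_subset_left) hXfin).ne
    have hint : ∀ (f : (Fin d → ℝ) → ℝ) (M : ℝ), Measurable f → (∀ y ∈ X, |f y| ≤ M) →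
        IntegrableOn (fun y => Real.sign (h y) * f y) (X ∩ {y | h y ≠ 0}) volume := by
      intro f M hf hfb
      apply Measure.integrableOn_of_bounded (M := M) hS1fin
        ((measurable_realSign.comp hhm).mul hf).aestronglyMeasurable
      rw [ae_restrict_iff' hS1m]
      filter_upwards with y hy
      have h1 : |f y| ≤ M := hfb y hy.1
      calc ‖Real.sign (h y) * f y‖ = |Real.sign (h y)| * |f y| := abs_mul _ _
        _ ≤ 1 * |f y| := by
            exact mul_le_mul_of_nonneg_right (abs_realSign_le _) (abs_nonneg _)
        _ ≤ M := by rw [one_mul]; exact h1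
    constructor
    · rintro f g hf hg ⟨Mf, hMf⟩ ⟨Mg, hMg⟩
      simp only [dPhi, hz, add_zero, Pi.add_apply]
      rw [show (fun y => Real.sign (h y) * (f y + g y)) =
          (fun y => Real.sign (h y) * f y) + fun y => Real.sign (h y) * g y by
            funext y; simp [mul_add]]
      exact integral_add (hint f Mf hf hMf) (hint g Mg hg hMg)
    · rintro f hf ⟨Mf, hMf⟩ c
      simp only [dPhi, hz, add_zero, Pi.smul_apply, smul_eq_mul]
      rw [show (fun y => Real.sign (h y) * (c * f y)) =
          fun y => c * (Real.sign (h y) * f y) by funext y; ring]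
      exact integral_const_mul c _
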